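/- arXiv:2404.15556 — 5 statements merged into one kernel-verified Lean document; each statement's English description precedes it below -/
import Mathlib

section
/- Let X be a topological space and let ζ : C_cc(X) → ℝ be a functional that is monotone and Lipschitz with respect to the supremum norm. A nonempty compact subset A ⊆ X is ζ-heavy (i.e. ζ(H) ≥ min_A H for every H ∈ C_cc(X)) if and only if for every H ∈ C_cc(X) and every c ∈ ℝ such that H ≡ c on some open neighborhood of A, one has ζ(H) ≥ c. -/
open Set

/-- `Ccc f` : `f` is continuous and differs from some constant by a compactly
supported function, i.e. `f ∈ C_cc(X)`. -/
def Ccc {X : Type*} [TopologicalSpace X] (f : X → ℝ) : Prop :=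
  Continuous f ∧ ∃ c : ℝ, HasCompactSupport (fun x => f x - c)

/-- Monotonicity of a functional on `C_cc(X)`. -/
def IsMonotoneFunctional {X : Type*} [TopologicalSpace X] (ζ : (X → ℝ) → ℝ) : Prop :=
  ∀ H₁ H₂ : X → ℝ, Ccc H₁ → Ccc H₂ → (∀ x, H₁ x ≤ H₂ x) → ζ H₁ ≤ ζ H₂

/-- Lipschitz continuity of a functional on `C_cc(X)` with respect to the
supremum norm: if `|H₁ - H₂| ≤ C` everywhere then `|ζ H₁ - ζ H₂| ≤ C`. -/
def IsLipschitzFunctional {X : Type*} [TopologicalSpace X] (ζ : (X → ℝ) → ℝ) : Prop :=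
  ∀ H₁ H₂ : X → ℝ, Ccc H₁ → Ccc H₂ → ∀ C : ℝ,
    (∀ x, |H₁ x - H₂ x| ≤ C) → |ζ H₁ - ζ H₂| ≤ C

/-- `A` is `ζ`-heavy: `ζ(H) ≥ min_A H` for every `H ∈ C_cc(X)`. -/
def IsHeavy {X : Type*} [TopologicalSpace X] (ζ : (X → ℝ) → ℝ) (A : Set X) : Prop :=
  ∀ H : X → ℝ, Ccc H → sInf (H '' A) ≤ ζ H

theorem heavy_iff_constant_near
    {X : Type*} [TopologicalSpace X] (ζ : (X → ℝ) → ℝ)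
    (hmono : IsMonotoneFunctional ζ) (hlip : IsLipschitzFunctional ζ)
    (A : Set X) (hA : IsCompact A) (hAne : A.Nonempty) :
    IsHeavy ζ A ↔
      ∀ (H : X → ℝ) (c : ℝ), Ccc H →
        (∃ U : Set X, IsOpen U ∧ A ⊆ U ∧ ∀ x ∈ U, H x = c) → c ≤ ζ H := by
  constructor
  · rintro hheavy H c hH ⟨U, hUopen, hAU, hconst⟩
    have himg : H '' A = {c} := by
      apply Set.eq_singleton_iff_nonempty_unique_mem.2
      refine ⟨hAne.image H, ?_⟩
      rintro y ⟨x, hx, rfl⟩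
      exact hconst x (hAU hx)
    have := hheavy H hH
    rwa [himg, csInf_singleton] at this
  · intro h H hH
    have hKcomp : IsCompact (H '' A) := hA.image hH.1
    have hKne : (H '' A).Nonempty := hAne.image H
    set m := sInf (H '' A) with hm
    have hlow : ∀ x ∈ A, m ≤ H x := fun x hx =>
      csInf_le hKcomp.bddBelow ⟨x, hx, rfl⟩
    have key : ∀ ε : ℝ, 0 < ε → m - ε ≤ ζ H := by
      intro ε hε
      set G : X → ℝ := fun x => min (H x) (m - ε) with hGdef
      have hGcont : Continuous G := hH.1.min continuous_const
      have hGccc : Ccc G := by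
        refine ⟨hGcont, ?_⟩
        obtain ⟨c, hc⟩ := hH.2
        refine ⟨min c (m - ε), hc.mono' ?_⟩
        intro x hx
        apply subset_tsupport
        intro hx0
        apply hx
        have hHx : H x = c := by
          have hx0' : H x - c = 0 := hx0
          linarith
        simp [hGdef, hHx]
      have hGle : ∀ x, G x ≤ H x := fun x => min_le_left _ _
      have hGU : ∃ U : Set X, IsOpen U ∧ A ⊆ U ∧ ∀ x ∈ U, G x = m - ε := by
        refine ⟨{x | m - ε < H x}, isOpen_lt continuous_const hH.1, ?_, ?_⟩
        · intro x hx
          exact lt_of_lt_of_le (by linarith) (hlow x hx)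
        · intro x hx
          exact min_eq_right (le_of_lt hx)
      have h1 : m - ε ≤ ζ G := h G (m - ε) hGccc hGU
      have h2 : ζ G ≤ ζ H := hmono G H hGccc hH hGle
      linarith
    refine le_of_forall_pos_le_add fun ε hε => ?_
    linarith [key ε hε]
end

section
/- Let X be a topological space, A ⊆ X a subset, c ∈ ℝ, and let f : X → ℝ be a continuous function with f ≡ c on A such that f − c₀ has compact support for some constant c₀ ∈ ℝ. Then for every ε > 0 there exists a continuous function g : X → ℝ such that sup_{x ∈ X} |g(x) − f(x)| ≤ ε, g ≡ c on some open neighborhood of A, and g − c₀' has compact support for some constant c₀' ∈ ℝ. (Explicitly, g = max(f − ε, min(f + ε, c)) works, being equal to c on the open set {x : |f(x) − c| < ε} ⊇ A.) -/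
open Set

theorem approx_constant_on_neighborhood
    {X : Type*} [TopologicalSpace X] (A : Set X) (c : ℝ) (f : X → ℝ)
    (hf : Continuous f) (hfA : ∀ x ∈ A, f x = c)
    (hfc : ∃ c₀ : ℝ, HasCompactSupport (fun x => f x - c₀)) :
    ∀ ε : ℝ, 0 < ε →
      ∃ g : X → ℝ, Continuous g ∧ (∀ x, |g x - f x| ≤ ε) ∧
        (∃ U : Set X, IsOpen U ∧ A ⊆ U ∧ ∀ x ∈ U, g x = c) ∧
        ∃ c₀' : ℝ, HasCompactSupport (fun x => g x - c₀') := by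
  intro ε hε
  obtain ⟨c₀, hc₀⟩ := hfc
  set g : X → ℝ := fun x => max (f x - ε) (min (f x + ε) c) with hg
  refine ⟨g, ?_, ?_, ?_, ?_⟩
  · exact ((hf.sub continuous_const).max ((hf.add continuous_const).min continuous_const))
  · intro x
    have h1 : f x - ε ≤ g x := le_max_left _ _
    have h2 : g x ≤ f x + ε := max_le (by linarith) (min_le_left _ _)
    rw [abs_le]; constructor <;> linarith
  · refine ⟨{x | |f x - c| < ε}, ?_, ?_, ?_⟩
    · have : {x | |f x - c| < ε} = (fun x => |f x - c|) ⁻¹' (Iio ε) := rfl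
      rw [this]
      exact (((hf.sub continuous_const).abs)).isOpen_preimage _ isOpen_Iio
    · intro x hx; simp [hfA x hx, abs_lt, hε]
    · intro x hx
      simp only [mem_setOf_eq, abs_lt] at hx
      have : min (f x + ε) c = c := min_eq_right (by linarith [hx.1])
      simp [hg, this, max_eq_right]; linarith [hx.2]
  · refine ⟨max (c₀ - ε) (min (c₀ + ε) c), ?_⟩
    apply HasCompactSupport.mono' hc₀
    intro x hx
    have hx' : g x - max (c₀ - ε) (min (c₀ + ε) c) ≠ 0 := hx
    by_contra hxt
    have hfx : f x - c₀ = 0 := image_eq_zero_of_notMem_tsupport (f := fun x => f x - c₀) hxt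
    have : f x = c₀ := by linarith
    apply hx'
    simp [hg, this]
end

section
/- Let X be a metric space and let ζ : C_cc(X) → ℝ be a functional that is monotone and Lipschitz with respect to the supremum norm. Let (A_n)_{n∈ℕ} be a sequence of nonempty compact ζ-heavy subsets of X and let A ⊆ X be a nonempty compact subset such that the Hausdorff distance between A_n and A tends to 0 as n → ∞. Then A is ζ-heavy. -/
open Set Filter

theorem heavy_of_hausdorff_limit
    {X : Type*} [MetricSpace X] (ζ : (X → ℝ) → ℝ)
    (hmono : IsMonotoneFunctional ζ) (hlip : IsLipschitzFunctional ζ)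
    (A : ℕ → Set X) (hAcpt : ∀ n, IsCompact (A n)) (hAne : ∀ n, (A n).Nonempty)
    (hAheavy : ∀ n, IsHeavy ζ (A n))
    (B : Set X) (hB : IsCompact B) (hBne : B.Nonempty)
    (hconv : Tendsto (fun n => Metric.hausdorffDist (A n) B) atTop (nhds 0)) :
    IsHeavy ζ B := by
  intro H hH
  -- H is uniformly continuous
  obtain ⟨hcont, c, hcs⟩ := hH
  have huc : UniformContinuous H := by
    have h1 : UniformContinuous (fun x => H x - c) :=
      hcs.uniformContinuous_of_continuous (hcont.sub continuous_const)
    have : UniformContinuous (fun x => (H x - c) + c) :=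
      h1.add uniformContinuous_const
    simpa using this
  refine le_of_forall_pos_le_add ?_
  intro ε hε
  rw [Metric.uniformContinuous_iff] at huc
  obtain ⟨δ, hδ, hδε⟩ := huc ε hε
  -- choose n with hausdorffDist (A n) B < δ
  obtain ⟨n, hn⟩ := (Metric.tendsto_nhds.mp hconv δ hδ).exists
  rw [Real.dist_0_eq_abs, abs_of_nonneg Metric.hausdorffDist_nonneg] at hn
  have hne : EMetric.hausdorffEdist (A n) B ≠ ⊤ :=
    Metric.hausdorffEdist_ne_top_of_nonempty_of_bounded (hAne n) hBne
      (hAcpt n).isBounded hB.isBounded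
  have key : sInf (H '' B) ≤ sInf (H '' (A n)) + ε := by
    have h1 : ∀ y ∈ H '' (A n), sInf (H '' B) - ε ≤ y := by
      rintro _ ⟨a, ha, rfl⟩
      obtain ⟨b, hb, hab⟩ := Metric.exists_dist_lt_of_hausdorffDist_lt ha hn hne
      have h2 : sInf (H '' B) ≤ H b := csInf_le ((hB.image hcont).bddBelow) ⟨b, hb, rfl⟩
      have h3 : |H a - H b| < ε := by
        have := hδε (show dist a b < δ from hab)
        simpa [Real.dist_eq] using this
      have := abs_lt.mp h3
      linarith [this.1]
    have h4 : sInf (H '' B) - ε ≤ sInf (H '' (A n)) :=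
      le_csInf ((hAne n).image H) h1
    linarith
  exact key.trans (by linarith [hAheavy n H ⟨hcont, c, hcs⟩])
end

section
/- Let X be a metric space and let ζ : C_cc(X) → ℝ be a functional that is monotone and Lipschitz with respect to the supremum norm. Let (A_n)_{n∈ℕ} be a sequence of nonempty compact ζ-superheavy subsets of X and let A ⊆ X be a nonempty compact subset such that the Hausdorff distance between A_n and A tends to 0 as n → ∞. Then A is ζ-superheavy. -/
open Set Filter

/-- `A` is `ζ`-superheavy: `ζ(H) ≤ max_A H` for every `H ∈ C_cc(X)`. -/
def IsSuperheavy {X : Type*} [TopologicalSpace X] (ζ : (X → ℝ) → ℝ) (A : Set X) : Prop :=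
  ∀ H : X → ℝ, Ccc H → ζ H ≤ sSup (H '' A)

theorem superheavy_of_hausdorff_limit
    {X : Type*} [MetricSpace X] (ζ : (X → ℝ) → ℝ)
    (hmono : IsMonotoneFunctional ζ) (hlip : IsLipschitzFunctional ζ)
    (A : ℕ → Set X) (hAcpt : ∀ n, IsCompact (A n)) (hAne : ∀ n, (A n).Nonempty)
    (hAsh : ∀ n, IsSuperheavy ζ (A n))
    (B : Set X) (hB : IsCompact B) (hBne : B.Nonempty)
    (hconv : Tendsto (fun n => Metric.hausdorffDist (A n) B) atTop (nhds 0)) :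
    IsSuperheavy ζ B := by
  intro H hH
  obtain ⟨hc, c, hcs⟩ := hH
  have hUC : UniformContinuous H := by
    have hg : UniformContinuous (fun x => H x - c) :=
      hcs.uniformContinuous_of_continuous (by continuity)
    have hHe : H = (fun x => (H x - c) + c) := by ext x; ring
    rw [hHe]
    exact hg.add uniformContinuous_const
  refine le_of_forall_pos_le_add fun ε hε => ?_
  obtain ⟨δ, hδ, hδε⟩ := Metric.uniformContinuous_iff.1 hUC ε hε
  obtain ⟨n, hn⟩ := (hconv.eventually (gt_mem_nhds hδ)).exists
  have key : sSup (H '' A n) ≤ sSup (H '' B) + ε := by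
    apply csSup_le ((hAne n).image H)
    rintro y ⟨a, ha, rfl⟩
    have hne := Metric.hausdorffEdist_ne_top_of_nonempty_of_bounded (hAne n) hBne
      (hAcpt n).isBounded hB.isBounded
    have h1 : Metric.infDist a B < δ :=
      lt_of_le_of_lt (Metric.infDist_le_hausdorffDist_of_mem ha hne) hn
    obtain ⟨b, hbB, hab⟩ := hB.exists_infDist_eq_dist hBne a
    have hd : dist a b < δ := by rw [← hab]; exact h1
    have habs : |H a - H b| < ε := by
      have := hδε hd
      rwa [Real.dist_eq] at this
    have hHb : H b ≤ sSup (H '' B) :=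
      le_csSup ((hB.image hc).bddAbove) ⟨b, hbB, rfl⟩
    have := abs_le.1 habs.le
    linarith [this.1]
  exact le_trans (hAsh n H ⟨hc, c, hcs⟩) key
end

section
/- Let X be a locally compact Hausdorff topological space and let ζ : C_cc(X) → ℝ be any functional. If A ⊆ X is a nonempty compact ζ-superheavy subset and B ⊆ X is a nonempty compact ζ-heavy subset, then A ∩ B ≠ ∅. -/
open Set

theorem superheavy_inter_heavy_nonempty
    {X : Type*} [TopologicalSpace X] [LocallyCompactSpace X] [T2Space X]
    (ζ : (X → ℝ) → ℝ)
    (A : Set X) (hA : IsCompact A) (hAne : A.Nonempty) (hAsh : IsSuperheavy ζ A)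
    (B : Set X) (hB : IsCompact B) (hBne : B.Nonempty) (hBh : IsHeavy ζ B) :
    (A ∩ B).Nonempty := by
  by_contra h
  have hdisj : Disjoint B A := by
    rw [Set.not_nonempty_iff_eq_empty] at h
    rw [Set.disjoint_iff_inter_eq_empty, Set.inter_comm]
    exact h
  obtain ⟨f, hf1, hf0, hfc, _⟩ :=
    exists_continuous_one_zero_of_isCompact hB hA.isClosed hdisj
  have hCcc : Ccc (f : X → ℝ) := ⟨f.continuous, 0, by simpa using hfc⟩
  have hBim : (f : X → ℝ) '' B = {1} := by
    apply Subset.antisymm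
    · rintro _ ⟨x, hx, rfl⟩; exact hf1 hx
    · rintro _ rfl
      obtain ⟨x, hx⟩ := hBne
      exact ⟨x, hx, hf1 hx⟩
  have hAim : (f : X → ℝ) '' A = {0} := by
    apply Subset.antisymm
    · rintro _ ⟨x, hx, rfl⟩; exact hf0 hx
    · rintro _ rfl
      obtain ⟨x, hx⟩ := hAne
      exact ⟨x, hx, hf0 hx⟩
  have h1 := hBh f hCcc
  have h2 := hAsh f hCcc
  rw [hBim, csInf_singleton] at h1
  rw [hAim, csSup_singleton] at h2
  linarith
end
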